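/- Suppose ε₀ > 0, S(0) and S(ε₀) are both nonempty, and the set {⟨c, x⟩ : x ∈ S(0)} is bounded above. Then for every ε ∈ [0, ε₀]: S(ε) is nonempty, the set {⟨c, x⟩ : x ∈ S(ε)} is bounded above, and V(0) ≥ V(ε) ≥ (ε/ε₀)·V(ε₀) + (1 − ε/ε₀)·V(0). (The linear-program perturbation bound at the core of the proof of Lemma B.1: the optimal value is monotone and concave in the right-hand-side tightening.) -/

import Mathlib

private lemma mul_sSup_le (r X : ℝ) (A : Set ℝ) (hA : A.Nonempty) (hr : 0 ≤ r)
    (h : ∀ a ∈ A, r * a ≤ X) (hbdd : BddAbove A) : r * sSup A ≤ X := by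
  rcases eq_or_lt_of_le hr with h0 | h0
  · obtain ⟨a, ha⟩ := hA
    have := h a ha
    simp only [← h0, zero_mul] at this ⊢
    exact this
  · rw [mul_comm, ← le_div_iff₀ h0]
    exact csSup_le hA fun a ha => (le_div_iff₀ h0).2 (by rw [mul_comm]; exact h a ha)

/-- The linear-program perturbation bound at the core of the proof of Lemma B.1:
for feasible sets `S(ε) = {x ≥ 0 : A x ≤ b − ε·v}` with `v` a `0/1` vector and values
`V(ε) = sup {⟨c, x⟩ : x ∈ S(ε)}`, if `S(0)` and `S(ε₀)` are nonempty and `V(0)` is finite,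
then for every `ε ∈ [0, ε₀]` the problem is feasible with finite value and
`V(0) ≥ V(ε) ≥ (ε/ε₀)·V(ε₀) + (1 − ε/ε₀)·V(0)`. -/
theorem lp_perturbation (m n : ℕ) (hm : 0 < m) (hn : 0 < n)
    (A : Matrix (Fin m) (Fin n) ℝ) (b v : Fin m → ℝ) (c : Fin n → ℝ)
    (hv : ∀ i, v i = 0 ∨ v i = 1)
    (ε₀ : ℝ) (hε₀ : 0 < ε₀)
    (S : ℝ → Set (Fin n → ℝ))
    (hS : ∀ ε, S ε = {x | (∀ j, 0 ≤ x j) ∧ ∀ i, A.mulVec x i ≤ b i - ε * v i})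
    (V : ℝ → ℝ)
    (hV : ∀ ε, V ε = sSup ((fun x => ∑ j, c j * x j) '' S ε))
    (h0 : (S 0).Nonempty) (h1 : (S ε₀).Nonempty)
    (hbdd : BddAbove ((fun x => ∑ j, c j * x j) '' S 0)) :
    ∀ ε ∈ Set.Icc 0 ε₀,
      (S ε).Nonempty ∧ BddAbove ((fun x => ∑ j, c j * x j) '' S ε) ∧
        V ε ≤ V 0 ∧ (ε / ε₀) * V ε₀ + (1 - ε / ε₀) * V 0 ≤ V ε := by
  have hv0 : ∀ i, 0 ≤ v i := fun i => by rcases hv i with h | h <;> simp [h]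
  -- monotonicity of feasible sets
  have hsub : ∀ ε : ℝ, 0 ≤ ε → S ε ⊆ S 0 := by
    intro ε hε x hx
    rw [hS] at hx ⊢
    refine ⟨hx.1, fun i => ?_⟩
    have := hx.2 i
    have h2 : 0 ≤ ε * v i := mul_nonneg hε (hv0 i)
    simp only [zero_mul]
    linarith
  intro ε hε
  obtain ⟨hε0, hεε₀⟩ := hε
  set t := ε / ε₀ with ht_def
  have ht0 : 0 ≤ t := div_nonneg hε0 hε₀.le
  have ht1 : t ≤ 1 := div_le_one_of_le₀ hεε₀ hε₀.le
  have htε : t * ε₀ = ε := div_mul_cancel₀ ε hε₀.ne'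
  -- convex combination lemma
  have hcomb : ∀ x ∈ S ε₀, ∀ y ∈ S 0, (t • x + (1 - t) • y) ∈ S ε := by
    intro x hx y hy
    rw [hS] at hx hy ⊢
    constructor
    · intro j
      simp only [Pi.add_apply, Pi.smul_apply, smul_eq_mul]
      have := hx.1 j; have := hy.1 j
      nlinarith
    · intro i
      have hmx := hx.2 i
      have hmy := hy.2 i
      have hz : A.mulVec (t • x + (1 - t) • y) i
          = t * A.mulVec x i + (1 - t) * A.mulVec y i := by
        rw [Matrix.mulVec_add, Matrix.mulVec_smul, Matrix.mulVec_smul]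
        simp [smul_eq_mul]
      rw [hz]
      have h1' : t * A.mulVec x i ≤ t * (b i - ε₀ * v i) :=
        mul_le_mul_of_nonneg_left hmx ht0
      have h2' : (1 - t) * A.mulVec y i ≤ (1 - t) * (b i - 0 * v i) :=
        mul_le_mul_of_nonneg_left hmy (by linarith)
      have hterm : t * ε₀ * v i = ε * v i := by rw [htε]
      nlinarith
  -- nonempty
  obtain ⟨x₁, hx₁⟩ := h1
  obtain ⟨x₀, hx₀⟩ := h0
  have hne : (S ε).Nonempty := ⟨_, hcomb x₁ hx₁ x₀ hx₀⟩
  -- bounded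
  have hbddε : BddAbove ((fun x => ∑ j, c j * x j) '' S ε) :=
    hbdd.mono (Set.image_mono (hsub ε hε0))
  have hbddε₀ : BddAbove ((fun x => ∑ j, c j * x j) '' S ε₀) :=
    hbdd.mono (Set.image_mono (hsub ε₀ hε₀.le))
  refine ⟨hne, hbddε, ?_, ?_⟩
  · rw [hV, hV]
    exact csSup_le_csSup hbdd (hne.image _) (Set.image_mono (hsub ε hε0))
  · -- concavity bound
    have key : ∀ a ∈ (fun x => ∑ j, c j * x j) '' S ε₀,
        ∀ b' ∈ (fun x => ∑ j, c j * x j) '' S 0, t * a + (1 - t) * b' ≤ V ε := by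
      rintro a ⟨x, hx, rfl⟩ b' ⟨y, hy, rfl⟩
      have hmem := hcomb x hx y hy
      have hlin : (∑ j, c j * (t • x + (1 - t) • y) j)
          = t * (∑ j, c j * x j) + (1 - t) * (∑ j, c j * y j) := by
        simp only [Pi.add_apply, Pi.smul_apply, smul_eq_mul, Finset.mul_sum]
        rw [← Finset.sum_add_distrib]
        congr 1; ext j; ring
      rw [hV]
      calc t * (∑ j, c j * x j) + (1 - t) * (∑ j, c j * y j)
          = ∑ j, c j * (t • x + (1 - t) • y) j := hlin.symm
        _ ≤ _ := le_csSup hbddε ⟨_, hmem, rfl⟩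
    rw [hV ε₀, hV 0]
    have step1 : t * sSup ((fun x => ∑ j, c j * x j) '' S ε₀)
        ≤ V ε - (1 - t) * sSup ((fun x => ∑ j, c j * x j) '' S 0) := by
      refine mul_sSup_le _ _ _ ⟨_, x₁, hx₁, rfl⟩ ht0 (fun a ha => ?_) hbddε₀
      have step2 : (1 - t) * sSup ((fun x => ∑ j, c j * x j) '' S 0) ≤ V ε - t * a := by
        refine mul_sSup_le _ _ _ ⟨_, x₀, hx₀, rfl⟩ (by linarith) (fun b' hb' => ?_) hbdd
        have := key a ha b' hb'
        linarith
      linarith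
    linarith
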